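/- Let ρ be a positive semidefinite operator on a finite-dimensional complex Hilbert space with trace 1, let λ_1 ≥ λ_2 ≥ ⋯ be its eigenvalues in decreasing order, and set ε(D) = ∑_{i > D} λ_i. Then for every 0 < α < 1 and every D ≥ 1, ε(D) ≤ exp( ((1−α)/α) · ( S^α(ρ) − log(D/(1−α)) ) ), where S^α(ρ) = (1/(1−α)) log Tr(ρ^α) is the Renyi entropy of order α; equivalently, log ε(D) ≤ ((1−α)/α)(S^α(ρ) − log(D/(1−α))). -/

import Mathlib

open scoped ComplexOrder

/-- Tail of the spectrum vs Renyi entropy.  Let `ρ` be a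
density operator on a finite-dimensional space with eigenvalues
`lam 0 ≥ lam 1 ≥ ⋯` (enumerated with algebraic multiplicity via the
characteristic polynomial) and let `ε(D) = ∑_{t ≥ D} lam t`.  Then for
`0 < α < 1` and `D ≥ 1`,
`log ε(D) ≤ ((1-α)/α) (S^α(ρ) - log (D/(1-α)))`, where
`S^α(ρ) = (1/(1-α)) log Tr ρ^α`; equivalently,
`ε(D) ≤ exp (((1-α)/α) (S^α(ρ) - log (D/(1-α))))`. -/
theorem stmt_18 (n : ℕ) (ρ : Matrix (Fin n) (Fin n) ℂ)
    (hpsd : ρ.PosSemidef) (htr : ρ.trace = 1)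
    (lam : ℕ → ℝ)
    (hsort : ∀ s t : ℕ, s ≤ t → t < n → lam t ≤ lam s)
    (heig : ρ.charpoly =
      ∏ t ∈ Finset.range n, (Polynomial.X - Polynomial.C ((lam t : ℂ))))
    (α : ℝ) (hα0 : 0 < α) (hα1 : α < 1) (D : ℕ) (hD : 1 ≤ D) :
    ∑ t ∈ Finset.Ico D n, lam t ≤
      Real.exp (((1 - α) / α) *
        ((1 / (1 - α)) * Real.log (∑ t ∈ Finset.range n, lam t ^ α) -
          Real.log ((D : ℝ) / (1 - α)))) := by
  classical
  have hlam : ∀ t, t < n → 0 ≤ lam t := by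
    intro t ht
    have hroot : ρ.charpoly.eval ((lam t : ℂ)) = 0 := by
      rw [heig, Polynomial.eval_prod]
      exact Finset.prod_eq_zero (Finset.mem_range.mpr ht) (by simp)
    have hdet : (algebraMap ℂ (Matrix (Fin n) (Fin n) ℂ) ((lam t : ℂ)) - ρ).det = 0 := by
      have hmap : ((ρ.charmatrix).map (Polynomial.evalRingHom ((lam t : ℂ)))) =
          algebraMap ℂ (Matrix (Fin n) (Fin n) ℂ) ((lam t : ℂ)) - ρ := by
        ext i j
        by_cases hij : i = j
        · subst hij
          simp [Matrix.charmatrix_apply_eq, Matrix.algebraMap_matrix_apply]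
        · simp [Matrix.charmatrix_apply_ne _ _ _ hij, Matrix.algebraMap_matrix_apply, hij]
      rw [← hmap, ← RingHom.mapMatrix_apply, ← RingHom.map_det]
      simpa [Matrix.charpoly] using hroot
    have hspec : (lam t : ℂ) ∈ spectrum ℂ ρ := by
      rw [spectrum.mem_iff]
      intro h
      exact (Matrix.isUnit_iff_isUnit_det _).mp h |>.ne_zero hdet
    have hH := hpsd.1
    rw [hH.spectral_theorem, Unitary.conjStarAlgAut_apply, Unitary.spectrum_star_right_conjugate,
      spectrum_diagonal] at hspec
    obtain ⟨i, hi⟩ := hspec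
    have : hH.eigenvalues i = lam t := by
      have := hi
      simp only [Function.comp_apply] at this
      exact_mod_cast congrArg Complex.re this
    rw [← this]
    exact hpsd.eigenvalues_nonneg i
  set ε := ∑ t ∈ Finset.Ico D n, lam t with hεdef
  set S := ∑ t ∈ Finset.range n, lam t ^ α with hSdef
  by_cases hεpos : 0 < ε
  swap
  · exact le_trans (not_lt.mp hεpos) (Real.exp_pos _).le
  have h1α : (0:ℝ) < 1 - α := by linarith
  have hDn : D < n := by
    by_contra h
    rw [hεdef, Finset.Ico_eq_empty (by omega), Finset.sum_empty] at hεpos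
    exact lt_irrefl _ hεpos
  have hlamD : 0 < lam D := by
    by_contra h
    push_neg at h
    have : ε ≤ 0 := Finset.sum_nonpos fun t ht => by
      obtain ⟨h1, h2⟩ := Finset.mem_Ico.mp ht
      exact le_trans (hsort D t h1 h2) h
    linarith
  have hDpos : (0:ℝ) < (D:ℝ) := by exact_mod_cast Nat.pos_of_ne_zero (by omega)
  have hRpos : (0:ℝ) < (D:ℝ) / (1 - α) := div_pos hDpos h1α
  -- head bound
  have hhead : (D:ℝ) * lam D ^ α ≤ ∑ t ∈ Finset.range D, lam t ^ α := by
    have := Finset.card_nsmul_le_sum (Finset.range D) (fun t => lam t ^ α) (lam D ^ α)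
      (fun t ht => Real.rpow_le_rpow hlamD.le
        (hsort t D (Finset.mem_range.mp ht).le hDn) hα0.le)
    simpa [nsmul_eq_mul] using this
  -- tail bound
  have htail : ε * lam D ^ (α - 1) ≤ ∑ t ∈ Finset.Ico D n, lam t ^ α := by
    rw [hεdef, Finset.sum_mul]
    apply Finset.sum_le_sum
    intro t ht
    obtain ⟨h1, h2⟩ := Finset.mem_Ico.mp ht
    rcases eq_or_lt_of_le (hlam t h2) with h0 | hpos
    · rw [← h0, Real.zero_rpow hα0.ne', zero_mul]
    · have hle : lam D ^ (α - 1) ≤ lam t ^ (α - 1) :=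
        Real.rpow_le_rpow_of_nonpos hpos (hsort D t h1 h2) (by linarith)
      calc lam t * lam D ^ (α - 1) ≤ lam t * lam t ^ (α - 1) := by
            exact mul_le_mul_of_nonneg_left hle hpos.le
        _ = lam t ^ α := by
            rw [← Real.rpow_one_add' hpos.le (by linarith)]
            ring_nf
  have hsplit : ∑ t ∈ Finset.range D, lam t ^ α + ∑ t ∈ Finset.Ico D n, lam t ^ α = S := by
    rw [hSdef]; exact Finset.sum_range_add_sum_Ico _ hDn.le
  set A := (D:ℝ) * lam D ^ α with hA
  set B := ε * lam D ^ (α - 1) with hB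
  have hApos : 0 < A := mul_pos hDpos (Real.rpow_pos_of_pos hlamD _)
  have hBpos : 0 < B := mul_pos hεpos (Real.rpow_pos_of_pos hlamD _)
  have hAB : A + B ≤ S := by
    calc A + B ≤ (∑ t ∈ Finset.range D, lam t ^ α) + ∑ t ∈ Finset.Ico D n, lam t ^ α :=
          add_le_add hhead htail
      _ = S := hsplit
  -- AM-GM
  have hgm := Real.geom_mean_le_arith_mean2_weighted h1α.le hα0.le
    (div_nonneg hApos.le h1α.le) (div_nonneg hBpos.le hα0.le) (by ring)
  have hgm2 : (A / (1 - α)) ^ (1 - α) * (B / α) ^ α ≤ A + B := by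
    have e : (1 - α) * (A / (1 - α)) + α * (B / α) = A + B := by
      field_simp
    linarith [hgm, e.ge]
  have e1 : (A / (1 - α)) ^ (1 - α) * (B / α) ^ α
      = ((D:ℝ) / (1 - α)) ^ (1 - α) * (ε / α) ^ α := by
    rw [show A / (1 - α) = ((D:ℝ) / (1 - α)) * lam D ^ α by rw [hA]; ring,
      show B / α = (ε / α) * lam D ^ (α - 1) by rw [hB]; ring,
      Real.mul_rpow hRpos.le (Real.rpow_pos_of_pos hlamD _).le,
      Real.mul_rpow (div_nonneg hεpos.le hα0.le) (Real.rpow_pos_of_pos hlamD _).le,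
      ← Real.rpow_mul hlamD.le, ← Real.rpow_mul hlamD.le, mul_mul_mul_comm,
      ← Real.rpow_add hlamD, show α * (1 - α) + (α - 1) * α = 0 by ring,
      Real.rpow_zero, mul_one]
  have e2 : ((D:ℝ) / (1 - α)) ^ (1 - α) * ε ^ α ≤ S := by
    have hεα : ε ^ α ≤ (ε / α) ^ α :=
      Real.rpow_le_rpow hεpos.le (by rw [le_div_iff₀ hα0]; nlinarith) hα0.le
    calc ((D:ℝ) / (1 - α)) ^ (1 - α) * ε ^ α
        ≤ ((D:ℝ) / (1 - α)) ^ (1 - α) * (ε / α) ^ α :=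
          mul_le_mul_of_nonneg_left hεα (Real.rpow_pos_of_pos hRpos _).le
      _ = (A / (1 - α)) ^ (1 - α) * (B / α) ^ α := e1.symm
      _ ≤ A + B := hgm2
      _ ≤ S := hAB
  have hprodpos : 0 < ((D:ℝ) / (1 - α)) ^ (1 - α) * ε ^ α :=
    mul_pos (Real.rpow_pos_of_pos hRpos _) (Real.rpow_pos_of_pos hεpos _)
  have hSpos : 0 < S := lt_of_lt_of_le hprodpos e2
  have hlog : (1 - α) * Real.log ((D:ℝ) / (1 - α)) + α * Real.log ε ≤ Real.log S := by
    have := Real.log_le_log hprodpos e2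
    rwa [Real.log_mul (Real.rpow_pos_of_pos hRpos _).ne' (Real.rpow_pos_of_pos hεpos _).ne',
      Real.log_rpow hRpos, Real.log_rpow hεpos] at this
  rw [← Real.log_le_iff_le_exp hεpos, div_mul_eq_mul_div, le_div_iff₀ hα0]
  have expand : (1 - α) * ((1 / (1 - α)) * Real.log S - Real.log ((D:ℝ) / (1 - α)))
      = Real.log S - (1 - α) * Real.log ((D:ℝ) / (1 - α)) := by
    field_simp
  rw [expand]
  nlinarith [hlog]
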